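/- Let (X, T) be a topological space, k ∈ ℕ, and (x_s)_{s∈[ℕ]^k} a k-sequence in X. Then for every infinite subset N of ℕ such that the closure of {x_s : s ∈ [N]^k} is a compact metrizable subspace of (X, T), there exists an infinite subset M of N such that (x_s)_{s∈[M]^k} is subordinated. -/

import Mathlib

/-- `s : Fin k → ℕ` is the increasing enumeration of a `k`-element subset of `M`. -/
def IsEnum (M : Set ℕ) {k : ℕ} (s : Fin k → ℕ) : Prop :=
  StrictMono s ∧ ∀ i, s i ∈ M

/-- `(p j)_{j=1,…,l}` is a plegma family in `[M]^k`. -/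
def IsPlegma (M : Set ℕ) {k l : ℕ} (p : Fin l → Fin k → ℕ) : Prop :=
  (∀ j, IsEnum M (p j)) ∧
  (∀ i : Fin k, StrictMono fun j : Fin l => p j i) ∧
  (∀ (i : Fin k) (hi : (i : ℕ) + 1 < k) (j j' : Fin l), p j i < p j' ⟨(i : ℕ) + 1, hi⟩)



/-- The point of the Cantor space `{0,1}^ℕ` corresponding to the finite subset of `ℕ`
enumerated by `s`. -/
def enumChar {k : ℕ} (s : Fin k → ℕ) : ℕ → Bool := fun n => decide (∃ i, s i = n)

/-- The subset of the Cantor space `{0,1}^ℕ` corresponding to `[M]^{≤ k}`, the subsets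
of `M` of cardinality at most `k`. -/
def cantorLE (k : ℕ) (M : Set ℕ) : Set (ℕ → Bool) :=
  {f | ∃ (j : ℕ) (_ : j ≤ k) (s : Fin j → ℕ), IsEnum M s ∧ f = enumChar s}

/-- `(x s)_{s ∈ [M]^k}` converges to `x₀`: for every open `U ∋ x₀` all `x s` with
`s ∈ [M]^k` and `s(1) ≥ M m` (equivalently, all entries `≥ M m`) eventually lie in `U`. -/
def ConvergesTo {X : Type*} [TopologicalSpace X] {k : ℕ}
    (M : ℕ → ℕ) (x : (Fin k → ℕ) → X) (x₀ : X) : Prop :=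
  ∀ U : Set X, IsOpen U → x₀ ∈ U →
    ∃ m : ℕ, ∀ s : Fin k → ℕ, IsEnum (Set.range M) s → (∀ i, M m ≤ s i) → x s ∈ U



open Topology Filter

section AuxSubordination



theorem myRamsey {κ : Type*} [Finite κ] :
    ∀ (k : ℕ) (L : Set ℕ), L.Infinite → ∀ (c : (Fin k → ℕ) → κ),
    ∃ L' : Set ℕ, L' ⊆ L ∧ L'.Infinite ∧ ∃ a : κ,
      ∀ s : Fin k → ℕ, StrictMono s → (∀ i, s i ∈ L') → c s = a := by
  intro k
  induction k with
  | zero =>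
    intro L hL c
    exact ⟨L, le_refl _, hL, c (fun i => i.elim0), fun s _ _ => congrArg c (Subsingleton.elim _ _)⟩
  | succ k ih =>
    intro L hL c
    classical
    -- one step of the construction
    have step : ∀ (A : Set ℕ), A.Infinite → ∃ B : Set ℕ, B ⊆ A ∧ B.Infinite ∧
        (∀ b ∈ B, sInf A < b) ∧ ∃ a : κ, ∀ s : Fin k → ℕ, StrictMono s →
          (∀ i, s i ∈ B) → c (Fin.cons (sInf A) s) = a := by
      intro A hA
      have hA' : {m ∈ A | sInf A < m}.Infinite := by
        have : A \ {m | m ≤ sInf A} ⊆ {m ∈ A | sInf A < m} := by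
          intro m hm; exact ⟨hm.1, by simpa using hm.2⟩
        exact ((hA.diff (Set.finite_Iic (sInf A))).mono this)
      obtain ⟨B, hB1, hB2, a, ha⟩ := ih {m ∈ A | sInf A < m} hA'
        (fun s => c (Fin.cons (sInf A) s))
      exact ⟨B, fun b hb => (hB1 hb).1, hB2, fun b hb => (hB1 hb).2, a, ha⟩
    -- iterate
    let F : ℕ → Set ℕ := fun i => Nat.rec L
      (fun _ prev => if h : prev.Infinite then (step prev h).choose else Set.univ) i
    have hF0 : F 0 = L := rfl
    have hFinf : ∀ i, (F i).Infinite := by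
      intro i
      induction i with
      | zero => exact hL
      | succ i ihh =>
        have : F (i+1) = (step (F i) ihh).choose := by
          simp only [F]
          rw [dif_pos]
          exact ihh
        rw [this]
        exact (step (F i) ihh).choose_spec.2.1
    have hFstep : ∀ i, F (i+1) ⊆ F i ∧ (∀ b ∈ F (i+1), sInf (F i) < b) ∧
        ∃ a : κ, ∀ s : Fin k → ℕ, StrictMono s → (∀ i', s i' ∈ F (i+1)) →
          c (Fin.cons (sInf (F i)) s) = a := by
      intro i
      have : F (i+1) = (step (F i) (hFinf i)).choose := by
        simp only [F]; rw [dif_pos]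
        exact hFinf i
      rw [this]
      obtain ⟨h1, _, h3, h4⟩ := (step (F i) (hFinf i)).choose_spec
      exact ⟨h1, h3, h4⟩
    have hFmono : ∀ i j, i ≤ j → F j ⊆ F i := by
      intro i j hij
      induction j with
      | zero => simp_all
      | succ j ihh =>
        rcases Nat.lt_or_ge i (j+1) with h | h
        · exact ((hFstep j).1).trans (ihh (by omega))
        · have : i = j + 1 := by omega
          subst this; rfl
    set n : ℕ → ℕ := fun i => sInf (F i) with hn
    have hnmem : ∀ i, n i ∈ F i := fun i => Nat.sInf_mem (hFinf i).nonempty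
    have hnlt : ∀ i j, i < j → n i < n j := by
      intro i j hij
      have : n j ∈ F (i+1) := hFmono (i+1) j hij (hnmem j)
      exact (hFstep i).2.1 _ this
    -- color of each level
    have hcolor : ∀ i, ∃ a : κ, ∀ s : Fin k → ℕ, StrictMono s →
        (∀ i', s i' ∈ F (i+1)) → c (Fin.cons (n i) s) = a := fun i => (hFstep i).2.2
    choose a ha using hcolor
    obtain ⟨a₀, ha₀⟩ := Finite.exists_infinite_fiber a
    have hI : {i | a i = a₀}.Infinite := by
      rw [← Set.infinite_coe_iff]; exact ha₀
    refine ⟨n '' {i | a i = a₀}, ?_, ?_, a₀, ?_⟩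
    · rintro _ ⟨i, _, rfl⟩
      exact hFmono 0 i (Nat.zero_le _) (hnmem i)
    · exact hI.image (fun i _ j _ hij => by
        by_contra hne
        rcases Nat.lt_or_ge i j with h | h
        · exact absurd hij (Nat.ne_of_lt (hnlt i j h))
        · have : j < i := by omega
          exact absurd hij.symm (Nat.ne_of_lt (hnlt j i this)))
    · intro s hs hsm
      have h0 : ∃ i₀, a i₀ = a₀ ∧ n i₀ = s 0 := by
        obtain ⟨i₀, hi₀, he⟩ := hsm 0; exact ⟨i₀, hi₀, he⟩
      obtain ⟨i₀, hi₀a, hi₀⟩ := h0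
      have htail : ∀ m : Fin k, Fin.tail s m ∈ F (i₀ + 1) := by
        intro m
        obtain ⟨im, him, hem⟩ := hsm m.succ
        have hlt : n i₀ < n im := by
          rw [hi₀, hem]
          exact hs (Fin.succ_pos m)
        have hlt2 : i₀ < im := by
          rcases Nat.lt_trichotomy i₀ im with h|h|h
          · exact h
          · subst h; omega
          · have := hnlt im i₀ h; omega
        show s m.succ ∈ F (i₀ + 1)
        rw [← hem]
        exact hFmono (i₀+1) im hlt2 (hnmem im)
      have htailmono : StrictMono (Fin.tail s) := by
        intro u v huv
        exact hs (Fin.succ_lt_succ_iff.mpr huv)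
      have := ha i₀ (Fin.tail s) htailmono htail
      rw [← hi₀a, ← this, hi₀, Fin.cons_self_tail]



/-- Extend a strictly monotone `(k-j)`-tuple with entries in an infinite set `L'`
to a strictly monotone `k`-tuple with entries in `L'` agreeing on the first `k - j`
coordinates. -/
theorem exists_extension {k j : ℕ} (hj : j ≤ k) (L' : Set ℕ) (hL' : L'.Infinite)
    (v : Fin (k - j) → ℕ) (hv : StrictMono v) (hvL : ∀ a, v a ∈ L') :
    ∃ u : Fin k → ℕ, StrictMono u ∧ (∀ i, u i ∈ L') ∧
      ∀ a : Fin (k - j), u ⟨(a : ℕ), by have := a.isLt; omega⟩ = v a := by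
  classical
  have hinf : {n | n ∈ L'}.Infinite := hL'
  set q : ℕ := (Finset.univ.sup v) + 1 with hq
  have hvq : ∀ a, v a < q := by
    intro a
    have : v a ≤ Finset.univ.sup v := Finset.le_sup (Finset.mem_univ a)
    omega
  refine ⟨fun i => if h : (i : ℕ) < k - j then v ⟨i, h⟩ else Nat.nth (· ∈ L') (q + i), ?_, ?_, ?_⟩
  · intro i i' hii
    have hii' : (i : ℕ) < (i' : ℕ) := hii
    have hge : ∀ m : ℕ, m ≤ Nat.nth (· ∈ L') m := fun m => (Nat.nth_strictMono hinf).le_apply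
    dsimp only
    split_ifs with h1 h2 h2
    · exact hv (Fin.mk_lt_mk.mpr hii')
    · calc v ⟨i, h1⟩ < q := hvq _
        _ ≤ q + (i' : ℕ) := by omega
        _ ≤ _ := hge _
    · omega
    · exact (Nat.nth_lt_nth hinf).mpr (by omega)
  · intro i
    dsimp only
    split_ifs with h1
    · exact hvL _
    · exact Nat.nth_mem_of_infinite hinf _
  · intro a
    simp [a.isLt]



theorem strictMono_range_unique {j j' : ℕ} (t : Fin j → ℕ) (t' : Fin j' → ℕ)
    (ht : StrictMono t) (ht' : StrictMono t')
    (hr : ∀ r : ℕ, (∃ i, t i = r) ↔ (∃ i, t' i = r)) :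
    j = j' ∧ ∀ (i : ℕ) (h1 : i < j) (h2 : i < j'), t ⟨i, h1⟩ = t' ⟨i, h2⟩ := by
  classical
  set F : Finset ℕ := Finset.image t Finset.univ with hF
  have hcard : F.card = j := by
    rw [hF, Finset.card_image_of_injective _ ht.injective, Finset.card_univ, Fintype.card_fin]
  have hFeq : F = Finset.image t' Finset.univ := by
    ext r
    simp only [hF, Finset.mem_image, Finset.mem_univ, true_and]
    exact hr r
  have hcard' : F.card = j' := by
    rw [hFeq, Finset.card_image_of_injective _ ht'.injective, Finset.card_univ, Fintype.card_fin]
  have hjj : j = j' := by omega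
  subst hjj
  have he1 : t = F.orderEmbOfFin hcard :=
    Finset.orderEmbOfFin_unique hcard
      (fun i => by simp [hF]) ht
  have he2 : t' = F.orderEmbOfFin hcard :=
    Finset.orderEmbOfFin_unique hcard
      (fun i => by rw [hFeq]; simp) ht'
  refine ⟨rfl, fun i h1 h2 => ?_⟩
  rw [he1, he2]

theorem prefix_lemma {j j' R : ℕ} (t : Fin j → ℕ) (t' : Fin j' → ℕ)
    (ht : StrictMono t) (ht' : StrictMono t')
    (hle : ∀ i, t i ≤ R)
    (hagree : ∀ r, r ≤ R → ((∃ i, t i = r) ↔ (∃ i, t' i = r))) :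
    j ≤ j' ∧ (∀ (i : ℕ) (h1 : i < j) (h2 : i < j'), t' ⟨i, h2⟩ = t ⟨i, h1⟩) ∧
      (∀ i : Fin j', j ≤ (i : ℕ) → R < t' i) := by
  classical
  set S : Finset (Fin j') := Finset.univ.filter (fun i => t' i ≤ R) with hS
  have hdown : ∀ i i' : Fin j', i ≤ i' → i' ∈ S → i ∈ S := by
    intro i i' hii hi'
    simp only [hS, Finset.mem_filter, Finset.mem_univ, true_and] at hi' ⊢
    exact le_trans (ht'.monotone hii) hi'
  have himg : S.image t' = Finset.image t Finset.univ := by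
    ext r
    simp only [hS, Finset.mem_image, Finset.mem_filter, Finset.mem_univ, true_and]
    constructor
    · rintro ⟨i, hiR, rfl⟩
      obtain ⟨i0, hi0⟩ := (hagree _ hiR).mpr ⟨i, rfl⟩
      exact ⟨i0, hi0⟩
    · rintro ⟨i0, rfl⟩
      obtain ⟨i, hi⟩ := (hagree _ (hle i0)).mp ⟨i0, rfl⟩
      exact ⟨i, by rw [hi]; exact hle i0, hi⟩
  have hcardS : S.card = j := by
    have h1 : (S.image t').card = S.card :=
      Finset.card_image_of_injective _ ht'.injective
    have h2 : (Finset.image t Finset.univ).card = j := by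
      rw [Finset.card_image_of_injective _ ht.injective, Finset.card_univ, Fintype.card_fin]
    rw [← h1, himg, h2]
  have hmemS : ∀ i : Fin j', i ∈ S ↔ (i : ℕ) < j := by
    intro i
    constructor
    · intro hi
      have hsub : Finset.Iic i ⊆ S := fun i' hi' =>
        hdown i' i (Finset.mem_Iic.mp hi') hi
      have := Finset.card_le_card hsub
      rw [Fin.card_Iic, hcardS] at this
      omega
    · intro hij
      by_contra hi
      have hsub : S ⊆ Finset.Iio i := by
        intro i' hi'
        rw [Finset.mem_Iio]
        by_contra hge
        exact hi (hdown i i' (not_lt.mp (fun hc => hge hc)) hi')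
      have := Finset.card_le_card hsub
      rw [Fin.card_Iio, hcardS] at this
      omega
  have hjj' : j ≤ j' := by
    have := Finset.card_le_card (Finset.subset_univ S)
    rw [hcardS, Finset.card_univ, Fintype.card_fin] at this
    exact this
  have hbig : ∀ i : Fin j', j ≤ (i : ℕ) → R < t' i := by
    intro i hij
    have : i ∉ S := fun hi => by have := (hmemS i).mp hi; omega
    simp only [hS, Finset.mem_filter, Finset.mem_univ, true_and, not_le] at this
    exact this
  refine ⟨hjj', ?_, hbig⟩
  -- the restriction of t' to the first j coordinates equals t
  set r : Fin j → ℕ := fun a => t' ⟨(a : ℕ), lt_of_lt_of_le a.isLt hjj'⟩ with hrdef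
  have hrmono : StrictMono r := fun a b hab => ht' (Fin.mk_lt_mk.mpr hab)
  have hrange : ∀ rr : ℕ, (∃ a, r a = rr) ↔ (∃ i0, t i0 = rr) := by
    intro rr
    constructor
    · rintro ⟨a, rfl⟩
      have haS : (⟨(a : ℕ), lt_of_lt_of_le a.isLt hjj'⟩ : Fin j') ∈ S :=
        (hmemS _).mpr a.isLt
      simp only [hS, Finset.mem_filter, Finset.mem_univ, true_and] at haS
      exact (hagree _ haS).mpr ⟨_, rfl⟩
    · rintro ⟨i0, rfl⟩
      obtain ⟨i, hi⟩ := (hagree _ (hle i0)).mp ⟨i0, rfl⟩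
      have hiS : i ∈ S := by
        simp only [hS, Finset.mem_filter, Finset.mem_univ, true_and]
        rw [hi]; exact hle i0
      have hij := (hmemS i).mp hiS
      exact ⟨⟨(i : ℕ), hij⟩, by rw [hrdef]; simpa using hi⟩
  obtain ⟨-, heq⟩ := strictMono_range_unique r t hrmono ht hrange
  intro i h1 h2
  exact heq i h1 h1


/-- Concatenation of a `j`-tuple with a `(k-j)`-tuple into a `k`-tuple. -/
def glue (k j : ℕ) (t : Fin j → ℕ) (v : Fin (k - j) → ℕ) : Fin k → ℕ :=
  fun i => if h : (i : ℕ) < j then t ⟨i, h⟩ else v ⟨(i : ℕ) - j, by have := i.isLt; omega⟩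

theorem refine_exists {E : Type*} [MetricSpace E] [CompactSpace E] (k : ℕ)
    (y : (Fin k → ℕ) → E) (L : Set ℕ) (hL : L.Infinite) (T : Finset ℕ) (ε : ℝ) (hε : 0 < ε) :
    ∃ L', L' ⊆ L ∧ L'.Infinite ∧
      ∀ (j : ℕ), j ≤ k → ∀ (t : Fin j → ℕ), (∀ i, t i ∈ T) →
        ∀ (v v' : Fin (k - j) → ℕ), StrictMono v → (∀ a, v a ∈ L') →
          StrictMono v' → (∀ a, v' a ∈ L') →
          dist (y (glue k j t v)) (y (glue k j t v')) < 2 * ε := by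
  classical
  haveI : Nonempty E := ⟨y (fun _ => 0)⟩
  -- a finite ε-net
  obtain ⟨D, -, hDfin, hDcov⟩ := (isCompact_univ : IsCompact (Set.univ : Set E)).finite_cover_balls hε
  haveI : Finite ↥D := hDfin
  have hnear : ∀ e : E, ∃ c : ↥D, dist e (c : E) < ε := by
    intro e
    have := hDcov (Set.mem_univ e)
    simp only [Set.mem_iUnion, Metric.mem_ball] at this
    obtain ⟨c, hc, hce⟩ := this
    exact ⟨⟨c, hc⟩, hce⟩
  choose near hnear using hnear
  -- the coloring
  let κ := (j : Fin (k + 1)) → (Fin (j : ℕ) → ↥T) → ↥D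
  haveI : Finite κ := by infer_instance
  let c : (Fin k → ℕ) → κ := fun u j t =>
    near (y (glue k (j : ℕ) (fun i => ((t i : ℕ)))
      (fun a => u ⟨(a : ℕ), by have := a.isLt; have := j.isLt; omega⟩)))
  obtain ⟨L', hL'sub, hL'inf, a, ha⟩ := myRamsey k L hL c
  refine ⟨L', hL'sub, hL'inf, ?_⟩
  intro j hj t htT v v' hv hvL hv' hv'L
  -- key claim: the color of `glue k j t v` is determined
  have key : ∀ (w : Fin (k - j) → ℕ), StrictMono w → (∀ a, w a ∈ L') →
      near (y (glue k j t w)) = a ⟨j, by omega⟩ (fun i => ⟨t i, htT i⟩) := by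
    intro w hw hwL
    obtain ⟨u, hu, huL, huw⟩ := exists_extension hj L' hL'inf w hw hwL
    have hcu := ha u hu huL
    have : c u ⟨j, by omega⟩ (fun i => ⟨t i, htT i⟩) = a ⟨j, by omega⟩ (fun i => ⟨t i, htT i⟩) := by
      rw [hcu]
    rw [← this]
    show near (y (glue k j t w)) = near (y (glue k j (fun i => t i) (fun a => u ⟨(a : ℕ), _⟩)))
    congr 2
    funext i
    unfold glue
    split_ifs with h1
    · rfl
    · exact (huw _).symm
  have h1 := key v hv hvL
  have h2 := key v' hv' hv'L
  calc dist (y (glue k j t v)) (y (glue k j t v'))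
      ≤ dist (y (glue k j t v)) (near (y (glue k j t v)) : E)
        + dist (y (glue k j t v')) (near (y (glue k j t v')) : E) := by
        rw [h1, h2]; exact dist_triangle_right _ _ _
    _ < ε + ε := by exact add_lt_add (hnear _) (hnear _)
    _ = 2 * ε := by ring

theorem exists_M {E : Type*} [MetricSpace E] [CompactSpace E] (k : ℕ)
    (y : (Fin k → ℕ) → E) (N : ℕ → ℕ) (hN : StrictMono N) :
    ∃ M : ℕ → ℕ, StrictMono M ∧ Set.range M ⊆ Set.range N ∧
      ∀ (n j : ℕ), j ≤ k → ∀ (t : Fin j → ℕ) (v v' : Fin (k - j) → ℕ),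
        (∀ i, ∃ q, q ≤ n ∧ t i = M q) →
        StrictMono v → (∀ a, v a ∈ Set.range M ∧ M n < v a) →
        StrictMono v' → (∀ a, v' a ∈ Set.range M ∧ M n < v' a) →
        dist (y (glue k j t v)) (y (glue k j t v')) < 2 * (1/2 : ℝ)^n := by
  classical
  have hcond : ∀ A : Set ℕ, A.Infinite → {m ∈ A | sInf A < m}.Infinite := by
    intro A hA
    have hsub : A \ {m | m ≤ sInf A} ⊆ {m ∈ A | sInf A < m} := by
      intro m hm; exact ⟨hm.1, by simpa using hm.2⟩
    exact (hA.diff (Set.finite_Iic (sInf A))).mono hsub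
  have hstep : ∀ (n : ℕ) (T : Finset ℕ) (A : Set ℕ), A.Infinite → ∃ B, B ⊆ A ∧ B.Infinite ∧
      ∀ (j : ℕ), j ≤ k → ∀ (t : Fin j → ℕ), (∀ i, t i ∈ T) →
        ∀ (v v' : Fin (k - j) → ℕ), StrictMono v → (∀ a, v a ∈ B) →
          StrictMono v' → (∀ a, v' a ∈ B) →
          dist (y (glue k j t v)) (y (glue k j t v')) < 2 * (1/2 : ℝ)^n :=
    fun n T A hA => refine_exists k y A hA T ((1/2 : ℝ)^n) (by positivity)
  let step : ℕ → Finset ℕ × Set ℕ → Finset ℕ × Set ℕ := fun n p =>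
    if h : {m ∈ p.2 | sInf p.2 < m}.Infinite then
      (insert (sInf p.2) p.1, (hstep n (insert (sInf p.2) p.1) _ h).choose)
    else p
  let S : ℕ → Finset ℕ × Set ℕ := fun n => Nat.rec (∅, Set.range N) (fun n' p => step n' p) n
  let M : ℕ → ℕ := fun n => sInf (S n).2
  have hS0 : (S 0).2 = Set.range N := rfl
  have hSsucc : ∀ n, S (n + 1) = step n (S n) := fun n => rfl
  have hstepS : ∀ n, (S n).2.Infinite →
      (S (n+1)).1 = insert (M n) (S n).1 ∧ (S (n+1)).2 ⊆ {m ∈ (S n).2 | M n < m} ∧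
      (S (n+1)).2.Infinite ∧
      ∀ (j : ℕ), j ≤ k → ∀ (t : Fin j → ℕ), (∀ i, t i ∈ insert (M n) (S n).1) →
        ∀ (v v' : Fin (k - j) → ℕ), StrictMono v → (∀ a, v a ∈ (S (n+1)).2) →
          StrictMono v' → (∀ a, v' a ∈ (S (n+1)).2) →
          dist (y (glue k j t v)) (y (glue k j t v')) < 2 * (1/2 : ℝ)^n := by
    intro n hA
    have h := hcond _ hA
    have e1 : S (n+1) = (insert (M n) (S n).1,
        (hstep n (insert (M n) (S n).1) _ h).choose) := by
      rw [hSsucc n]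
      show step n (S n) = _
      simp only [step]
      rw [dif_pos h]
    obtain ⟨hB1, hB2, hB3⟩ := (hstep n (insert (M n) (S n).1) _ h).choose_spec
    rw [e1]
    exact ⟨rfl, hB1, hB2, hB3⟩
  have hInf : ∀ n, (S n).2.Infinite := by
    intro n
    induction n with
    | zero => exact Set.infinite_range_of_injective hN.injective
    | succ n ihh => exact (hstepS n ihh).2.2.1
  have hMmem : ∀ n, M n ∈ (S n).2 := fun n => Nat.sInf_mem (hInf n).nonempty
  have hsub : ∀ n, (S (n+1)).2 ⊆ (S n).2 := fun n m hm => ((hstepS n (hInf n)).2.1 hm).1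
  have hchain : ∀ i j, i ≤ j → (S j).2 ⊆ (S i).2 := by
    intro i j hij
    induction j with
    | zero => simp_all
    | succ j ihh =>
      rcases Nat.lt_or_ge i (j+1) with h | h
      · exact (hsub j).trans (ihh (by omega))
      · have : i = j + 1 := by omega
        subst this; rfl
  have hMlt : ∀ n, M n < M (n+1) := by
    intro n
    exact ((hstepS n (hInf n)).2.1 (hMmem (n+1))).2
  have hM : StrictMono M := strictMono_nat_of_lt_succ hMlt
  have hrange : Set.range M ⊆ Set.range N := by
    rintro _ ⟨n, rfl⟩
    exact hchain 0 n (Nat.zero_le _) (hMmem n)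
  have hT : ∀ n a, a ∈ (S n).1 ↔ ∃ i, i < n ∧ M i = a := by
    intro n
    induction n with
    | zero => intro a; simp [S]
    | succ n ihh =>
      intro a
      rw [(hstepS n (hInf n)).1, Finset.mem_insert]
      constructor
      · rintro (rfl | h)
        · exact ⟨n, by omega, rfl⟩
        · obtain ⟨i, hi, he⟩ := (ihh a).mp h
          exact ⟨i, by omega, he⟩
      · rintro ⟨i, hi, rfl⟩
        rcases Nat.lt_or_ge i n with h | h
        · exact Or.inr ((ihh _).mpr ⟨i, h, rfl⟩)
        · have : i = n := by omega
          subst this; exact Or.inl rfl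
  refine ⟨M, hM, hrange, ?_⟩
  intro n j hj t v v' ht hv hvR hv' hv'R
  have hGood := (hstepS n (hInf n)).2.2.2 j hj t ?_ v v' hv ?_ hv' ?_
  · exact hGood
  · intro i
    obtain ⟨q, hq, he⟩ := ht i
    rcases Nat.lt_or_ge q n with h | h
    · exact Finset.mem_insert_of_mem ((hT n (t i)).mpr ⟨q, h, he.symm⟩)
    · have : q = n := by omega
      subst this
      rw [he]; exact Finset.mem_insert_self _ _
  · intro a
    obtain ⟨⟨q, he⟩, hlt⟩ := hvR a
    have hq : n < q := by
      by_contra hq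
      have := hM.le_iff_le.mpr (by omega : q ≤ n)
      omega
    rw [← he]
    exact hchain (n+1) q hq (hMmem q)
  · intro a
    obtain ⟨⟨q, he⟩, hlt⟩ := hv'R a
    have hq : n < q := by
      by_contra hq
      have := hM.le_iff_le.mpr (by omega : q ≤ n)
      omega
    rw [← he]
    exact hchain (n+1) q hq (hMmem q)

/-- An upper bound for the entries of a tuple. -/
def bnd {j : ℕ} (t : Fin j → ℕ) : ℕ := Finset.univ.sup t

theorem le_bnd {j : ℕ} (t : Fin j → ℕ) (i : Fin j) : t i ≤ bnd t :=
  Finset.le_sup (Finset.mem_univ i)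

/-- Tail completion: extend the `j`-tuple `t` by entries of `M` beyond `bnd t` and `p`. -/
def tailM (M : ℕ → ℕ) (k j : ℕ) (t : Fin j → ℕ) (p : ℕ) : Fin (k - j) → ℕ :=
  fun a => M (bnd t + 1 + p + (a : ℕ))

section Approx

variable {E : Type*} [MetricSpace E] (k : ℕ) (y : (Fin k → ℕ) → E) (M : ℕ → ℕ)

/-- The approximating point at stage `p` for the finite tuple `t`. -/
def approx {j : ℕ} (t : Fin j → ℕ) (p : ℕ) : E := y (glue k j t (tailM M k j t p))

variable {k y M}

theorem approx_close (hM : StrictMono M)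
    (hP : ∀ (n j : ℕ), j ≤ k → ∀ (t : Fin j → ℕ) (v v' : Fin (k - j) → ℕ),
        (∀ i, ∃ q, q ≤ n ∧ t i = M q) →
        StrictMono v → (∀ a, v a ∈ Set.range M ∧ M n < v a) →
        StrictMono v' → (∀ a, v' a ∈ Set.range M ∧ M n < v' a) →
        dist (y (glue k j t v)) (y (glue k j t v')) < 2 * (1/2 : ℝ)^n)
    {j j' n : ℕ} (hj : j ≤ k) (hj' : j' ≤ k) (hjj' : j ≤ j')
    {t : Fin j → ℕ} {t' : Fin j' → ℕ}
    (ht : IsEnum (Set.range M) t) (ht' : IsEnum (Set.range M) t')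
    (hpre : ∀ (i : ℕ) (h1 : i < j) (h2 : i < j'), t' ⟨i, h2⟩ = t ⟨i, h1⟩)
    (hbig : ∀ i : Fin j', j ≤ (i : ℕ) → M n < t' i)
    (htn : ∀ i, t i ≤ M n)
    {p p' : ℕ} (hp : n ≤ p) (hp' : n ≤ p') :
    dist (approx k y M t' p) (approx k y M t p') < 2 * (1/2 : ℝ)^n := by
  -- rewrite `glue k j' t' (tailM …)` as `glue k j t v`
  set v : Fin (k - j) → ℕ := fun a =>
    if h : (a : ℕ) < j' - j then t' ⟨j + (a : ℕ), by omega⟩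
    else M (bnd t' + 1 + p + ((a : ℕ) + j - j')) with hv
  have hglue : glue k j' t' (tailM M k j' t' p) = glue k j t v := by
    funext i
    have hik := i.isLt
    simp only [glue, tailM, hv, Fin.val_mk]
    split_ifs with h1 h2 h3 h2 h3 <;>
      first
      | omega
      | { exact hpre i h2 h1 }
      | { exact congrArg t' (Fin.ext (by simp only [Fin.val_mk]; omega)) }
      | { exact congrArg (fun q => M (bnd t' + 1 + p + q)) (by omega) }
  have happrox : approx k y M t' p = y (glue k j t v) := by
    unfold approx; rw [hglue]
  have happrox' : approx k y M t p' = y (glue k j t (tailM M k j t p')) := rfl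
  rw [happrox, happrox']
  apply hP n j hj t v (tailM M k j t p')
  · intro i
    obtain ⟨q, hq⟩ := ht.2 i
    refine ⟨q, ?_, hq.symm⟩
    have := htn i
    rw [← hq] at this
    exact hM.le_iff_le.mp this
  · -- v strict mono
    intro a b hab
    have hab' : (a : ℕ) < (b : ℕ) := hab
    rw [hv]
    dsimp only
    split_ifs with h1 h2 h2
    · exact ht'.1 (Fin.mk_lt_mk.mpr (by omega))
    · calc t' ⟨j + (a : ℕ), _⟩ ≤ M (bnd t') := by
            have h := le_bnd t' ⟨j + (a : ℕ), by omega⟩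
            calc t' _ ≤ bnd t' := h
              _ ≤ M (bnd t') := hM.le_apply
        _ < M (bnd t' + 1 + p + ((b : ℕ) + j - j')) := hM (by omega)
    · omega
    · exact hM (by omega)
  · -- v entries
    intro a
    rw [hv]
    dsimp only
    split_ifs with h1
    · exact ⟨ht'.2 _, hbig _ (by simp)⟩
    · exact ⟨⟨_, rfl⟩, hM (by omega)⟩
  · -- tailM strict mono
    intro a b hab
    exact hM (by have : (a : ℕ) < (b : ℕ) := hab; omega)
  · -- tailM entries
    intro a
    refine ⟨⟨_, rfl⟩, hM (by omega)⟩

end Approx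

theorem two_halves_small (ε : ℝ) (hε : 0 < ε) (n₀ : ℕ) :
    ∃ n : ℕ, n₀ ≤ n ∧ 2 * (1/2 : ℝ)^n < ε := by
  obtain ⟨n₁, hn₁⟩ := exists_pow_lt_of_lt_one (by positivity : (0:ℝ) < ε/2)
    (by norm_num : (1/2 : ℝ) < 1)
  refine ⟨max n₀ n₁, le_max_left _ _, ?_⟩
  have h1 : (1/2 : ℝ)^(max n₀ n₁) ≤ (1/2 : ℝ)^n₁ :=
    pow_le_pow_of_le_one (by norm_num) (by norm_num) (le_max_right _ _)
  linarith

theorem exists_extension_map {E : Type*} [MetricSpace E] [CompactSpace E] [Nonempty E]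
    (k : ℕ) (y : (Fin k → ℕ) → E) (M : ℕ → ℕ) (hM : StrictMono M)
    (hP : ∀ (n j : ℕ), j ≤ k → ∀ (t : Fin j → ℕ) (v v' : Fin (k - j) → ℕ),
        (∀ i, ∃ q, q ≤ n ∧ t i = M q) →
        StrictMono v → (∀ a, v a ∈ Set.range M ∧ M n < v a) →
        StrictMono v' → (∀ a, v' a ∈ Set.range M ∧ M n < v' a) →
        dist (y (glue k j t v)) (y (glue k j t v')) < 2 * (1/2 : ℝ)^n) :
    ∃ ψ : (ℕ → Bool) → E, ContinuousOn ψ (cantorLE k (Set.range M)) ∧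
      ∀ s : Fin k → ℕ, IsEnum (Set.range M) s → ψ (enumChar s) = y s := by
  classical
  -- extract data from a membership proof
  let jof : ∀ f : ℕ → Bool, f ∈ cantorLE k (Set.range M) → ℕ := fun f h => h.choose
  let hjof : ∀ f h, jof f h ≤ k := fun f h => h.choose_spec.choose
  let tof : ∀ f h, Fin (jof f h) → ℕ := fun f h => h.choose_spec.choose_spec.choose
  have hspec : ∀ f h, IsEnum (Set.range M) (tof f h) ∧ f = enumChar (tof f h) :=
    fun f h => h.choose_spec.choose_spec.choose_spec
  set ψ : (ℕ → Bool) → E := fun f =>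
    if h : f ∈ cantorLE k (Set.range M) then
      limUnder Filter.atTop (fun p => approx k y M (tof f h) p)
    else Classical.arbitrary E with hψ
  -- basic bound : all entries of `t` are at most `M n` for `n ≥ bnd t`
  have hbndle : ∀ {j : ℕ} (t : Fin j → ℕ) (n : ℕ), bnd t ≤ n → ∀ i, t i ≤ M n :=
    fun t n hn i => le_trans (le_bnd t i) (le_trans hM.le_apply (hM.monotone hn))
  -- Cauchy
  have hcauchy : ∀ {j : ℕ}, j ≤ k → ∀ t : Fin j → ℕ, IsEnum (Set.range M) t →
      CauchySeq (fun p => approx k y M t p) := by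
    intro j hj t ht
    rw [Metric.cauchySeq_iff']
    intro ε hε
    obtain ⟨n, hn0, hn⟩ := two_halves_small ε hε (bnd t)
    refine ⟨n, fun p hp => lt_trans ?_ hn⟩
    exact approx_close hM hP hj hj (le_refl j) ht ht
      (fun i h1 h2 => rfl) (fun i hi => absurd i.isLt (by omega))
      (hbndle t n hn0) hp (le_refl n)
  have htend : ∀ (f : ℕ → Bool) (h : f ∈ cantorLE k (Set.range M)),
      Filter.Tendsto (fun p => approx k y M (tof f h) p) Filter.atTop (𝓝 (ψ f)) := by
    intro f h
    obtain ⟨ℓ, hℓ⟩ := cauchySeq_tendsto_of_complete (hcauchy (hjof f h) (tof f h) (hspec f h).1)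
    have : ψ f = ℓ := by
      rw [hψ]
      dsimp only
      rw [dif_pos h]
      exact hℓ.limUnder_eq
    rw [this]
    exact hℓ
  refine ⟨ψ, ?_, ?_⟩
  · -- continuity
    intro f hf
    rw [ContinuousWithinAt, Metric.tendsto_nhds]
    intro ε hε
    obtain ⟨n, hn0, hn⟩ := two_halves_small ε hε (bnd (tof f hf))
    have hVopen : IsOpen {g : ℕ → Bool | ∀ r ∈ Finset.range (M n + 1), g r = f r} := by
      have : {g : ℕ → Bool | ∀ r ∈ Finset.range (M n + 1), g r = f r} =
          ⋂ r ∈ Finset.range (M n + 1), {g : ℕ → Bool | g r = f r} := by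
        ext g; simp
      rw [this]
      refine isOpen_biInter_finset fun r _ => ?_
      have : {g : ℕ → Bool | g r = f r} = (fun g : ℕ → Bool => g r) ⁻¹' {f r} := rfl
      rw [this]
      exact IsOpen.preimage (continuous_apply (A := fun _ : ℕ => Bool) r)
        (isOpen_discrete ({f r} : Set Bool))
    have hVmem : {g : ℕ → Bool | ∀ r ∈ Finset.range (M n + 1), g r = f r} ∈ 𝓝 f :=
      hVopen.mem_nhds (fun r _ => rfl)
    filter_upwards [mem_nhdsWithin_of_mem_nhds hVmem, self_mem_nhdsWithin] with g hgV hgS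
    -- compare the chosen tuples for `g` and `f`
    have hagree : ∀ r, r ≤ M n →
        ((∃ i, tof f hf i = r) ↔ (∃ i, tof g hgS i = r)) := by
      intro r hr
      have h1 : g r = f r := hgV r (Finset.mem_range.mpr (by omega))
      have h2 : enumChar (tof g hgS) r = enumChar (tof f hf) r := by
        rw [← (hspec g hgS).2, ← (hspec f hf).2, h1]
      exact (decide_eq_decide.mp h2).symm
    obtain ⟨hjj', hpre, hbig⟩ := prefix_lemma (tof f hf) (tof g hgS)
      (hspec f hf).1.1 (hspec g hgS).1.1 (hbndle _ n hn0) hagree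
    have hdist : dist (ψ g) (ψ f) ≤ 2 * (1/2 : ℝ)^n := by
      refine le_of_tendsto ((htend g hgS).dist (htend f hf)) ?_
      filter_upwards [Filter.eventually_ge_atTop n] with p hp
      exact (approx_close hM hP (hjof f hf) (hjof g hgS) hjj'
        (hspec f hf).1 (hspec g hgS).1 hpre hbig (hbndle _ n hn0) hp hp).le
    exact lt_of_le_of_lt hdist hn
  · -- extension
    intro s hs
    have hmem : enumChar s ∈ cantorLE k (Set.range M) := ⟨k, le_refl k, s, hs, rfl⟩
    have hr : ∀ r : ℕ, (∃ i, s i = r) ↔ (∃ i, tof (enumChar s) hmem i = r) := by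
      intro r
      have := congrFun (hspec (enumChar s) hmem).2 r
      exact decide_eq_decide.mp this
    obtain ⟨hkj, hpt⟩ := strictMono_range_unique s (tof (enumChar s) hmem)
      hs.1 (hspec (enumChar s) hmem).1.1 hr
    have hconst : (fun p => approx k y M (tof (enumChar s) hmem) p) = fun _ => y s := by
      funext p
      unfold approx
      congr 1
      funext i
      unfold glue
      rw [dif_pos (by omega : (i : ℕ) < jof (enumChar s) hmem)]
      rw [← hpt i i.isLt (by omega)]
    have : ψ (enumChar s) = limUnder Filter.atTop
        (fun p => approx k y M (tof (enumChar s) hmem) p) := by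
      rw [hψ]; dsimp only; rw [dif_pos hmem]
    rw [this, hconst]
    exact Filter.Tendsto.limUnder_eq tendsto_const_nhds


end AuxSubordination

/-- If the closure of `{x s : s ∈ [N]^k}` is a compact metrizable
subspace of `X`, then there is an infinite `M ⊆ N` such that `(x s)_{s ∈ [M]^k}` is
subordinated, i.e. extends to a continuous map on `[M]^{≤k}`. -/
theorem statement10 {X : Type*} [TopologicalSpace X] (k : ℕ) (x : (Fin k → ℕ) → X)
    (N : ℕ → ℕ) (hN : StrictMono N)
    (hcpt : IsCompact (closure (x '' {s | IsEnum (Set.range N) s})))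
    (hmetr : TopologicalSpace.MetrizableSpace
      ↥(closure (x '' {s | IsEnum (Set.range N) s}))) :
    ∃ M : ℕ → ℕ, StrictMono M ∧ Set.range M ⊆ Set.range N ∧
      ∃ φ : (ℕ → Bool) → X, ContinuousOn φ (cantorLE k (Set.range M)) ∧
        ∀ s : Fin k → ℕ, IsEnum (Set.range M) s → φ (enumChar s) = x s := by
  classical
  haveI hm : TopologicalSpace.MetrizableSpace
      ↥(closure (x '' {s | IsEnum (Set.range N) s})) := hmetr
  set C : Set X := closure (x '' {s | IsEnum (Set.range N) s}) with hC
  letI : MetricSpace ↥C := TopologicalSpace.metrizableSpaceMetric ↥C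
  haveI : CompactSpace ↥C := isCompact_iff_compactSpace.mp hcpt
  have hmemy : ∀ s : Fin k → ℕ, IsEnum (Set.range N) s → x s ∈ C := by
    intro s hs
    exact subset_closure ⟨s, hs, rfl⟩
  have hs₀ : IsEnum (Set.range N) (fun i : Fin k => N (i : ℕ)) :=
    ⟨fun a b hab => hN hab, fun i => ⟨i, rfl⟩⟩
  haveI : Nonempty ↥C := ⟨⟨x _, hmemy _ hs₀⟩⟩
  set y : (Fin k → ℕ) → ↥C := fun s =>
    if h : IsEnum (Set.range N) s then ⟨x s, hmemy s h⟩ else Classical.arbitrary ↥C with hy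
  obtain ⟨M, hM, hrange, hP⟩ := exists_M k y N hN
  obtain ⟨ψ, hψc, hψe⟩ := exists_extension_map k y M hM hP
  refine ⟨M, hM, hrange, fun g => (ψ g : X), ?_, ?_⟩
  · exact continuous_subtype_val.comp_continuousOn hψc
  · intro s hs
    have hsN : IsEnum (Set.range N) s := ⟨hs.1, fun i => hrange (hs.2 i)⟩
    show ((ψ (enumChar s) : ↥C) : X) = x s
    rw [hψe s hs, hy]
    dsimp only
    rw [dif_pos hsN]
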